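/- Define g : ℝ → ℝ by g(x) = Σ_{k=1}^∞ 2π·e^{−2k²π²}·cos(2kπx) (the termwise derivative of the Fourier series h(x) = 1/2 − (1/π)·Σ_{k=1}^∞ (1/k)·e^{−2k²π²}·sin(2kπx) of the sawtooth wave; the series converges absolutely). There exists a constant C > 0 such that for every y ∈ [0,1) with |y − 1/4| ≥ 1/50 and |y − 3/4| ≥ 1/50, and every x ∈ [y − 1/100, y + 1/100]: C ≤ |g(x)| and |g(x)| ≤ 1. -/

import Mathlib

open Real

/-- The termwise derivative of the Fourier series of the sawtooth wave:
`g(x) = Σ_{k=1}^∞ 2π·e^{−2k²π²}·cos(2kπx)` (the series converges absolutely). -/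
noncomputable def sawtoothDeriv (x : ℝ) : ℝ :=
  ∑' k : ℕ, 2 * π * Real.exp (-2 * ((k : ℝ) + 1) ^ 2 * π ^ 2) *
    Real.cos (2 * ((k : ℝ) + 1) * π * x)

namespace SawtoothAux

noncomputable def a : ℝ := Real.exp (-(2 * π ^ 2))

lemma a_pos : 0 < a := Real.exp_pos _

lemma a_le : a ≤ 1 / 4096 := by
  have h4 : (4 : ℝ) ≤ Real.exp 3 := by nlinarith [Real.add_one_le_exp (3 : ℝ)]
  have h18 : (4096 : ℝ) ≤ Real.exp 18 := by
    calc (4096 : ℝ) = 4 ^ 6 := by norm_num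
      _ ≤ Real.exp 3 ^ 6 := pow_le_pow_left₀ (by norm_num) h4 6
      _ = Real.exp ((6 : ℕ) * 3) := (Real.exp_nat_mul 3 6).symm
      _ = Real.exp 18 := by norm_num
  have hpi : (18 : ℝ) ≤ 2 * π ^ 2 := by nlinarith [Real.pi_gt_three]
  have h1 : a ≤ Real.exp (-18) := Real.exp_le_exp.2 (by linarith)
  rw [Real.exp_neg] at h1
  have h0 : (0:ℝ) < Real.exp 18 := Real.exp_pos _
  calc a ≤ (Real.exp 18)⁻¹ := h1
    _ ≤ (4096:ℝ)⁻¹ := inv_anti₀ (by norm_num) h18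
    _ = 1 / 4096 := by norm_num

lemma a_lt_one : a < 1 := lt_of_le_of_lt a_le (by norm_num)

noncomputable def f (x : ℝ) (k : ℕ) : ℝ :=
  2 * π * Real.exp (-2 * ((k : ℝ) + 1) ^ 2 * π ^ 2) * Real.cos (2 * ((k : ℝ) + 1) * π * x)

lemma exp_le (k : ℕ) :
    Real.exp (-2 * ((k : ℝ) + 1) ^ 2 * π ^ 2) ≤ a ^ (k + 1) := by
  unfold a
  rw [← Real.exp_nat_mul]
  apply Real.exp_le_exp.2
  have hk : (0 : ℝ) ≤ (k : ℝ) := Nat.cast_nonneg k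
  have key : (0:ℝ) ≤ (k : ℝ) * ((k:ℝ) + 1) * π ^ 2 := by positivity
  push_cast
  nlinarith [key]

lemma f_bound (x : ℝ) (k : ℕ) : |f x k| ≤ 2 * π * a * a ^ k := by
  have hc : |Real.cos (2 * ((k : ℝ) + 1) * π * x)| ≤ 1 := Real.abs_cos_le_one _
  have he : Real.exp (-2 * ((k : ℝ) + 1) ^ 2 * π ^ 2) ≤ a ^ (k + 1) := exp_le k
  have hep : (0:ℝ) < Real.exp (-2 * ((k : ℝ) + 1) ^ 2 * π ^ 2) := Real.exp_pos _
  have hπ : (0:ℝ) < π := Real.pi_pos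
  have hap : (0:ℝ) < a ^ k := pow_pos a_pos k
  have heq : |f x k| = 2 * π * Real.exp (-2 * ((k : ℝ) + 1) ^ 2 * π ^ 2) *
      |Real.cos (2 * ((k : ℝ) + 1) * π * x)| := by
    unfold f
    rw [abs_mul]
    congr 1
    exact abs_of_nonneg (by positivity)
  have hpow : a ^ (k + 1) = a * a ^ k := by rw [pow_succ]; ring
  rw [hpow] at he
  rw [heq]
  calc 2 * π * Real.exp (-2 * ((k : ℝ) + 1) ^ 2 * π ^ 2) *
        |Real.cos (2 * ((k : ℝ) + 1) * π * x)|
      ≤ 2 * π * Real.exp (-2 * ((k : ℝ) + 1) ^ 2 * π ^ 2) * 1 :=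
        mul_le_mul_of_nonneg_left hc (by positivity)
    _ = 2 * π * Real.exp (-2 * ((k : ℝ) + 1) ^ 2 * π ^ 2) := by ring
    _ ≤ 2 * π * (a * a ^ k) := by nlinarith
    _ = 2 * π * a * a ^ k := by ring

lemma summable_bound : Summable (fun k : ℕ => 2 * π * a * a ^ k) :=
  (summable_geometric_of_lt_one a_pos.le a_lt_one).mul_left _

lemma summable_abs_f (x : ℝ) : Summable (fun k => |f x k|) :=
  Summable.of_nonneg_of_le (fun _ => abs_nonneg _) (f_bound x) summable_bound

lemma summable_f (x : ℝ) : Summable (f x) := (summable_abs_f x).of_abs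

lemma f_succ_bound (x : ℝ) (k : ℕ) : |f x (k + 1)| ≤ 2 * π * a ^ 2 * a ^ k := by
  calc |f x (k + 1)| ≤ 2 * π * a * a ^ (k + 1) := f_bound x (k + 1)
    _ = 2 * π * a ^ 2 * a ^ k := by ring

lemma summable_abs_f_succ (x : ℝ) : Summable (fun k : ℕ => |f x (k + 1)|) :=
  (summable_abs_f x).comp_injective (add_left_injective 1)

lemma tail_bound (x : ℝ) : |∑' k : ℕ, f x (k + 1)| ≤ 2 * π * a ^ 2 * (1 - a)⁻¹ := by
  have hs' := summable_abs_f_succ x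
  have hb : Summable (fun k : ℕ => 2 * π * a ^ 2 * a ^ k) :=
    (summable_geometric_of_lt_one a_pos.le a_lt_one).mul_left _
  have h1 : |∑' k : ℕ, f x (k + 1)| ≤ ∑' k : ℕ, |f x (k + 1)| := by
    have := norm_tsum_le_tsum_norm (f := fun k : ℕ => f x (k + 1))
      (by simpa [Real.norm_eq_abs] using hs')
    simpa [Real.norm_eq_abs] using this
  calc |∑' k : ℕ, f x (k + 1)| ≤ ∑' k : ℕ, |f x (k + 1)| := h1
    _ ≤ ∑' k : ℕ, 2 * π * a ^ 2 * a ^ k := hs'.tsum_le_tsum (fun k => f_succ_bound x k) hb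
    _ = 2 * π * a ^ 2 * (1 - a)⁻¹ := by
        rw [tsum_mul_left, tsum_geometric_of_lt_one a_pos.le a_lt_one]

lemma total_bound (x : ℝ) : |sawtoothDeriv x| ≤ 2 * π * a * (1 - a)⁻¹ := by
  have hs' := summable_abs_f x
  have h1 : |∑' k : ℕ, f x k| ≤ ∑' k : ℕ, |f x k| := by
    have := norm_tsum_le_tsum_norm (f := f x) (by simpa [Real.norm_eq_abs] using hs')
    simpa [Real.norm_eq_abs] using this
  calc |sawtoothDeriv x| = |∑' k : ℕ, f x k| := rfl
    _ ≤ ∑' k : ℕ, |f x k| := h1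
    _ ≤ ∑' k : ℕ, 2 * π * a * a ^ k := hs'.tsum_le_tsum (f_bound x) summable_bound
    _ = 2 * π * a * (1 - a)⁻¹ := by
        rw [tsum_mul_left, tsum_geometric_of_lt_one a_pos.le a_lt_one]

lemma sawtooth_split (x : ℝ) : sawtoothDeriv x = f x 0 + ∑' k : ℕ, f x (k + 1) :=
  (summable_f x).tsum_eq_zero_add

lemma f_zero (x : ℝ) : f x 0 = 2 * π * a * Real.cos (2 * π * x) := by
  unfold f a
  norm_num

lemma cos_lb {φ : ℝ} (h : |φ| ≤ 12 * π / 25) : 1 / 20 ≤ |Real.cos φ| := by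
  have hπ : (0:ℝ) < π := Real.pi_pos
  have h1 : Real.cos (12 * π / 25) ≤ Real.cos |φ| :=
    Real.cos_le_cos_of_nonneg_of_le_pi (abs_nonneg _) (by linarith) h
  have h2 : Real.cos (12 * π / 25) = Real.sin (π / 50) := by
    rw [← Real.cos_pi_div_two_sub]; ring_nf
  have h3 : (1:ℝ)/20 ≤ Real.sin (π / 50) := by
    have hx0 : (0:ℝ) < π / 50 := by positivity
    have hx2 : π / 50 < 0.063 := by nlinarith [Real.pi_lt_d2]
    have hx1 : π / 50 ≤ 1 := by linarith
    have hcube : (π / 50) ^ 3 ≤ (0.063:ℝ) ^ 3 := pow_le_pow_left₀ (by positivity) hx2.le 3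
    have := Real.sin_gt_sub_cube hx0
    nlinarith [Real.pi_gt_d6]
  rw [Real.cos_abs] at h1
  rw [h2] at h1
  calc (1:ℝ)/20 ≤ Real.cos φ := by linarith
    _ ≤ |Real.cos φ| := le_abs_self _

lemma cos_main {x y : ℝ} (hy0 : 0 ≤ y) (hy1 : y < 1)
    (h14 : (1/50 : ℝ) ≤ |y - 1/4|) (h34 : (1/50 : ℝ) ≤ |y - 3/4|)
    (hx1 : y - 1/100 ≤ x) (hx2 : x ≤ y + 1/100) :
    1 / 20 ≤ |Real.cos (2 * π * x)| := by
  have hπ : (0:ℝ) < π := Real.pi_pos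
  rcases le_abs.mp h14 with h | h
  · rcases le_abs.mp h34 with h' | h'
    · -- y ≥ 3/4 + 1/50 : x near 1
      have hb : |x - 1| ≤ 6/25 := abs_le.2 ⟨by linarith, by linarith⟩
      have hc : Real.cos (2 * π * x) = Real.cos (2 * π * (x - 1)) := by
        have he : 2 * π * x = 2 * π * (x - 1) + 2 * π := by ring
        rw [he, Real.cos_add_two_pi]
      rw [hc]
      apply cos_lb
      rw [show 2 * π * (x - 1) = 2 * π * (x - 1) from rfl, abs_mul,
        abs_of_nonneg (by positivity : (0:ℝ) ≤ 2 * π)]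
      nlinarith
    · -- x near 1/2
      have hb : |x - 1/2| ≤ 6/25 := abs_le.2 ⟨by linarith, by linarith⟩
      have hc : Real.cos (2 * π * x) = -Real.cos (2 * π * (x - 1/2)) := by
        have he : 2 * π * x = 2 * π * (x - 1/2) + π := by ring
        rw [he, Real.cos_add_pi]
      rw [hc, abs_neg]
      apply cos_lb
      rw [abs_mul, abs_of_nonneg (by positivity : (0:ℝ) ≤ 2 * π)]
      nlinarith
  · -- x near 0
    have hb : |x| ≤ 6/25 := abs_le.2 ⟨by linarith, by linarith⟩
    apply cos_lb
    rw [abs_mul, abs_of_nonneg (by positivity : (0:ℝ) ≤ 2 * π)]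
    nlinarith

end SawtoothAux

open SawtoothAux in
/-- There is a constant `C > 0` such that for every `y ∈ [0,1)` with `|y − 1/4| ≥ 1/50`
and `|y − 3/4| ≥ 1/50`, and every `x ∈ [y − 1/100, y + 1/100]`,
`C ≤ |g(x)|` and `|g(x)| ≤ 1`, where `g` is the termwise derivative of the sawtooth
Fourier series. -/
theorem sawtoothDeriv_bounds :
    ∃ C : ℝ, 0 < C ∧
      ∀ y ∈ Set.Ico (0 : ℝ) 1, (1 / 50 : ℝ) ≤ |y - 1 / 4| → (1 / 50 : ℝ) ≤ |y - 3 / 4| →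
        ∀ x ∈ Set.Icc (y - 1 / 100) (y + 1 / 100),
          C ≤ |sawtoothDeriv x| ∧ |sawtoothDeriv x| ≤ 1 := by
  have hπ : (0:ℝ) < π := Real.pi_pos
  have ha := a_pos
  refine ⟨2 * π * a / 25, by positivity, ?_⟩
  rintro y ⟨hy0, hy1⟩ h14 h34 x ⟨hx1, hx2⟩
  have hπ' : π < 3.15 := Real.pi_lt_d2
  have hal := a_le
  have ha1 : (0:ℝ) < 1 - a := by linarith [a_lt_one]
  have hinv : (1 - a)⁻¹ ≤ 4096 / 4095 := by
    calc (1 - a)⁻¹ ≤ ((4095:ℝ)/4096)⁻¹ := inv_anti₀ (by norm_num) (by linarith)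
      _ = 4096/4095 := by norm_num
  constructor
  · -- lower bound
    have hcos := cos_main hy0 hy1 h14 h34 hx1 hx2
    have hsplit := sawtooth_split x
    have htail := tail_bound x
    have hf0' : 2 * π * a * (1/20) ≤ |f x 0| := by
      rw [f_zero, abs_mul, abs_of_nonneg (by positivity : (0:ℝ) ≤ 2 * π * a)]
      have := mul_le_mul_of_nonneg_left hcos (by positivity : (0:ℝ) ≤ 2 * π * a)
      linarith
    have htri : |f x 0| ≤ |sawtoothDeriv x| + |∑' k : ℕ, f x (k + 1)| := by
      have he : f x 0 = sawtoothDeriv x - ∑' k : ℕ, f x (k + 1) := by linarith [hsplit]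
      rw [he]
      exact abs_sub _ _
    have htb : 2 * π * a ^ 2 * (1 - a)⁻¹ ≤ 2 * π * a * (1/100) := by
      have h1 : a * (1 - a)⁻¹ ≤ (1/4096) * (4096/4095) := by
        apply mul_le_mul hal hinv (by positivity) (by norm_num)
      have h2 := mul_le_mul_of_nonneg_left h1 (by positivity : (0:ℝ) ≤ 2 * π * a)
      have h3 : 2 * π * a * (a * (1 - a)⁻¹) = 2 * π * a ^ 2 * (1 - a)⁻¹ := by ring
      rw [h3] at h2
      have h4 : 2 * π * a * (1/4096 * (4096/4095)) ≤ 2 * π * a * (1/100) := by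
        nlinarith [mul_pos hπ ha]
      linarith
    nlinarith
  · -- upper bound
    have h1 := total_bound x
    have hprod : a * (1 - a)⁻¹ ≤ (1/4096 : ℝ) * (4096/4095) :=
      mul_le_mul hal hinv (by positivity) (by norm_num)
    have h2 : 2 * π * a * (1 - a)⁻¹ ≤ 2 * π * ((1/4096 : ℝ) * (4096/4095)) := by
      nlinarith
    nlinarith
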